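/- LP relaxation solves the integer program with nested covariates: assume the covariates are nested and T ≤ L. Then the infimum of Σ_{p ∈ Fin P} Σ_{k ∈ Fin K_p} v_{p,k} over all (z, v) ∈ Q equals the minimum of Σ_{p ∈ Fin P} Σ_{k ∈ Fin K_p} |Σ_{ℓ ∈ L_{p,k}} z_ℓ − N_{p,k}| over all z : Fin L → {0, 1} with Σ_{ℓ ∈ Fin L} z_ℓ = T. -/

import Mathlib

open Finset

set_option linter.unusedSectionVars false
set_option maxHeartbeats 1000000

namespace LPIP


set_option linter.unusedSectionVars false

variable {ι : Type*} [DecidableEq ι]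

abbrev Level (ι : Type*) := (ι → ℕ) × (ℕ → ℤ)

def Coarser (a b : Level ι) : Prop :=
  ∀ k : ℕ, ∃ k' : ℕ, ∀ ℓ, b.1 ℓ = k → a.1 ℓ = k'

noncomputable def lcost (u : Finset ι) (lv : Level ι) (z : ι → ℝ) : ℝ :=
  ∑ k ∈ u.image lv.1, |(∑ ℓ ∈ u.filter (fun ℓ => lv.1 ℓ = k), z ℓ) - (lv.2 k : ℝ)|

noncomputable def cost : List (Level ι) → Finset ι → (ι → ℝ) → ℝ
  | [], _, _ => 0
  | lv :: ls, u, z => lcost u lv z + cost ls u z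

-- interpolation of |x - N| between floor and ceil
lemma abs_interp (x : ℝ) (hx : 0 ≤ x) (N : ℤ) :
    |x - N| = (1 - (x - (⌊x⌋₊ : ℝ))) * |((⌊x⌋₊ : ℕ) : ℝ) - N|
      + (x - (⌊x⌋₊ : ℝ)) * |((⌈x⌉₊ : ℕ) : ℝ) - N| := by
  by_cases hint : x = (⌊x⌋₊ : ℝ)
  · have hceq : (⌈x⌉₊ : ℝ) = (⌊x⌋₊ : ℝ) := by
      conv_lhs => rw [hint]
      rw [Nat.ceil_natCast]
    rw [hceq, ← hint]
    ring
  · have hflt : (⌊x⌋₊ : ℝ) < x := lt_of_le_of_ne (Nat.floor_le hx) (Ne.symm hint)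
    have hclt : x < (⌊x⌋₊ : ℝ) + 1 := Nat.lt_floor_add_one x
    have hceil : ⌈x⌉₊ = ⌊x⌋₊ + 1 := by
      refine le_antisymm ?_ ?_
      · refine Nat.ceil_le.mpr ?_
        push_cast; linarith
      · refine Nat.succ_le_of_lt ?_
        rw [Nat.lt_ceil]
        exact hflt
    rw [hceil]
    push_cast
    rcases le_or_gt (N : ℝ) (⌊x⌋₊ : ℝ) with hN | hN
    · rw [abs_of_nonneg (by linarith), abs_of_nonneg (by linarith),
        abs_of_nonneg (by linarith)]
      ring
    · have hNZ : (⌊x⌋₊ : ℤ) < N := by exact_mod_cast hN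
      have hNZ' : (⌊x⌋₊ : ℤ) + 1 ≤ N := hNZ
      have hN' : (⌊x⌋₊ : ℝ) + 1 ≤ (N : ℝ) := by exact_mod_cast hNZ'
      rw [abs_of_nonpos (by linarith), abs_of_nonpos (by linarith),
        abs_of_nonpos (by linarith)]
      ring

lemma lcost_congr (u : Finset ι) (lv : Level ι) {z z' : ι → ℝ}
    (h : ∀ ℓ ∈ u, z ℓ = z' ℓ) : lcost u lv z = lcost u lv z' := by
  unfold lcost
  refine Finset.sum_congr rfl fun k _ => ?_
  congr 1
  refine congrArg (· - _) ?_
  exact Finset.sum_congr rfl fun ℓ hℓ => h ℓ (Finset.mem_of_mem_filter ℓ hℓ)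

lemma cost_congr (ls : List (Level ι)) (u : Finset ι) {z z' : ι → ℝ}
    (h : ∀ ℓ ∈ u, z ℓ = z' ℓ) : cost ls u z = cost ls u z' := by
  induction ls with
  | nil => rfl
  | cons lv ls ih => simp only [cost, lcost_congr u lv h, ih]

lemma lcost_split (u : Finset ι) {a b : Level ι} (hab : Coarser a b) (z : ι → ℝ) :
    lcost u b z = ∑ k ∈ u.image a.1, lcost (u.filter (fun ℓ => a.1 ℓ = k)) b z := by
  classical
  choose g hg using hab
  have hmaps : ∀ k' ∈ u.image b.1, g k' ∈ u.image a.1 := by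
    intro k' hk'
    obtain ⟨ℓ, hℓu, hℓ⟩ := Finset.mem_image.mp hk'
    exact Finset.mem_image.mpr ⟨ℓ, hℓu, hg k' ℓ hℓ⟩
  have key := Finset.sum_fiberwise_of_maps_to hmaps
    (fun k' => |(∑ ℓ ∈ u.filter (fun ℓ => b.1 ℓ = k'), z ℓ) - (b.2 k' : ℝ)|)
  rw [lcost, ← key]
  refine Finset.sum_congr rfl fun k hk => ?_
  rw [lcost]
  have hidx : (u.image b.1).filter (fun k' => g k' = k)
      = (u.filter (fun ℓ => a.1 ℓ = k)).image b.1 := by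
    ext k'
    simp only [Finset.mem_filter, Finset.mem_image]
    constructor
    · rintro ⟨⟨ℓ, hℓu, hℓ⟩, hgk⟩
      exact ⟨ℓ, ⟨hℓu, by rw [hg k' ℓ hℓ, hgk]⟩, hℓ⟩
    · rintro ⟨ℓ, ⟨hℓu, hℓa⟩, hℓ⟩
      exact ⟨⟨ℓ, hℓu, hℓ⟩, by rw [← hg k' ℓ hℓ, hℓa]⟩
  rw [hidx]
  refine Finset.sum_congr rfl fun k' hk' => ?_
  obtain ⟨ℓ₀, hℓ₀, hℓ₀b⟩ := Finset.mem_image.mp hk'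
  rw [Finset.mem_filter] at hℓ₀
  have hfil : u.filter (fun ℓ => b.1 ℓ = k')
      = (u.filter (fun ℓ => a.1 ℓ = k)).filter (fun ℓ => b.1 ℓ = k') := by
    ext ℓ
    simp only [Finset.mem_filter]
    constructor
    · rintro ⟨hℓu, hℓb⟩
      refine ⟨⟨hℓu, ?_⟩, hℓb⟩
      rw [hg k' ℓ hℓb, ← hg k' ℓ₀ hℓ₀b]
      exact hℓ₀.2
    · rintro ⟨⟨hℓu, _⟩, hℓb⟩; exact ⟨hℓu, hℓb⟩
  rw [hfil]

lemma cost_split (ls : List (Level ι)) (u : Finset ι) {a : Level ι}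
    (hab : ∀ lv ∈ ls, Coarser a lv) (z : ι → ℝ) :
    cost ls u z = ∑ k ∈ u.image a.1, cost ls (u.filter (fun ℓ => a.1 ℓ = k)) z := by
  induction ls with
  | nil => simp [cost]
  | cons lv ls ih =>
    rw [cost, ih (fun l hl => hab l (List.mem_cons_of_mem _ hl)),
      lcost_split u (hab lv List.mem_cons_self) z, ← Finset.sum_add_distrib]
    rfl

lemma cost_nonneg (ls : List (Level ι)) (u : Finset ι) (z : ι → ℝ) :
    0 ≤ cost ls u z := by
  induction ls with
  | nil => exact le_refl 0
  | cons lv ls ih =>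
    have : 0 ≤ lcost u lv z := Finset.sum_nonneg fun k _ => abs_nonneg _
    exact add_nonneg this ih

-- full decomposition of cost over the head level's classes
lemma cost_decomp (lv : Level ι) (tl : List (Level ι)) (u : Finset ι)
    (hpair : ∀ b ∈ tl, Coarser lv b) (z : ι → ℝ) :
    cost (lv :: tl) u z = ∑ k ∈ u.image lv.1,
      (|(∑ ℓ ∈ u.filter (fun ℓ => lv.1 ℓ = k), z ℓ) - (lv.2 k : ℝ)|
        + cost tl (u.filter (fun ℓ => lv.1 ℓ = k)) z) := by
  rw [Finset.sum_add_distrib]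
  rw [cost, ← cost_split tl u hpair z]
  rfl


lemma sum_update_pair {s : Finset ℕ} {i j : ℕ} (hi : i ∈ s) (hj : j ∈ s) (hij : i ≠ j)
    (θ : ℕ → ℝ) (d : ℝ) :
    ∑ k ∈ s, (if k = i then θ i + d else if k = j then θ j - d else θ k) = ∑ k ∈ s, θ k := by
  have hj' : j ∈ s.erase i := Finset.mem_erase.mpr ⟨hij.symm, hj⟩
  have hrest : ∀ k ∈ (s.erase i).erase j,
      (if k = i then θ i + d else if k = j then θ j - d else θ k) = θ k := by
    intro k hk
    have hk1 : k ≠ j := (Finset.mem_erase.mp hk).1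
    have hk2 : k ≠ i := (Finset.mem_erase.mp (Finset.mem_erase.mp hk).2).1
    simp [hk1, hk2]
  rw [← Finset.add_sum_erase _ _ hi, ← Finset.add_sum_erase _ _ hj',
    ← Finset.add_sum_erase _ θ hi, ← Finset.add_sum_erase _ θ hj',
    Finset.sum_congr rfl hrest]
  simp only [if_pos rfl, if_neg hij.symm, if_neg hij, if_true]
  ring


lemma roundE (c0 c1 : ℕ → ℝ) (s : Finset ℕ) :
    ∀ (n : ℕ) (θ : ℕ → ℝ),
      (s.filter fun k => 0 < θ k ∧ θ k < 1).card ≤ n →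
      (∀ k ∈ s, 0 ≤ θ k ∧ θ k ≤ 1) →
      ∃ b0 b1 : ℕ → ℕ,
        (∀ k ∈ s, b0 k ≤ 1 ∧ (b0 k = 1 → 0 < θ k)) ∧
        (∀ k ∈ s, b1 k ≤ 1 ∧ (b1 k = 1 → 0 < θ k)) ∧
        (∑ k ∈ s, b0 k) = ⌊∑ k ∈ s, θ k⌋₊ ∧
        (∑ k ∈ s, b1 k) = ⌈∑ k ∈ s, θ k⌉₊ ∧
        (1 - (∑ k ∈ s, θ k - (⌊∑ k ∈ s, θ k⌋₊ : ℝ))) *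
            (∑ k ∈ s, (if b0 k = 1 then c1 k else c0 k))
          + (∑ k ∈ s, θ k - (⌊∑ k ∈ s, θ k⌋₊ : ℝ)) *
            (∑ k ∈ s, (if b1 k = 1 then c1 k else c0 k))
          ≤ ∑ k ∈ s, ((1 - θ k) * c0 k + θ k * c1 k) := by
  intro n
  induction n with
  | zero =>
    intro θ hcard hθ
    have h01 : ∀ k ∈ s, θ k = 0 ∨ θ k = 1 := by
      intro k hk
      have hnm : k ∉ s.filter fun k => 0 < θ k ∧ θ k < 1 := by
        intro hmem
        have := Finset.card_pos.mpr ⟨k, hmem⟩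
        omega
      rcases (hθ k hk).1.lt_or_eq with h | h
      · rcases (hθ k hk).2.lt_or_eq with h' | h'
        · exact absurd (Finset.mem_filter.mpr ⟨hk, h, h'⟩) hnm
        · right; exact h'
      · left; exact h.symm
    set b : ℕ → ℕ := fun k => if 1 ≤ θ k then 1 else 0 with hb
    have hble : ∀ k, b k ≤ 1 := by intro k; simp only [hb]; split <;> omega
    have hbpos : ∀ k ∈ s, b k = 1 → 0 < θ k := by
      intro k hk h1
      rcases h01 k hk with h | h
      · exfalso; rw [hb] at h1; norm_num [h] at h1
      · rw [h]; norm_num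
    have hval : ∀ k ∈ s, ((b k : ℕ) : ℝ) = θ k := by
      intro k hk; rcases h01 k hk with h | h <;> norm_num [hb, h]
    have hsum : ∑ k ∈ s, θ k = ((∑ k ∈ s, b k : ℕ) : ℝ) := by
      rw [Nat.cast_sum]; exact (Finset.sum_congr rfl hval).symm
    refine ⟨b, b, fun k hk => ⟨hble k, hbpos k hk⟩, fun k hk => ⟨hble k, hbpos k hk⟩, ?_, ?_, ?_⟩
    · rw [hsum, Nat.floor_natCast]
    · rw [hsum, Nat.ceil_natCast]
    · rw [hsum, Nat.floor_natCast]
      have hpick : ∀ k ∈ s, (if b k = 1 then c1 k else c0 k) = (1 - θ k) * c0 k + θ k * c1 k := by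
        intro k hk
        rcases h01 k hk with h | h
        · have hb0 : b k = 0 := by rw [hb]; norm_num [h]
          rw [hb0]; norm_num [h]
        · have hb1 : b k = 1 := by rw [hb]; norm_num [h]
          rw [hb1]; norm_num [h]
      rw [Finset.sum_congr rfl hpick]
      have : ((∑ k ∈ s, b k : ℕ) : ℝ) - ((∑ k ∈ s, b k : ℕ) : ℝ) = 0 := sub_self _
      rw [this]
      norm_num
  | succ n ih =>
    intro θ hcard hθ
    classical
    by_cases hle : (s.filter fun k => 0 < θ k ∧ θ k < 1).card ≤ n
    · exact ih θ hle hθ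
    have hFcard : (s.filter fun k => 0 < θ k ∧ θ k < 1).card = n + 1 := by omega
    -- helper: reduce to a modified θ'
    have key : ∀ θ' : ℕ → ℝ,
        (s.filter fun k => 0 < θ' k ∧ θ' k < 1).card ≤ n →
        (∀ k ∈ s, 0 ≤ θ' k ∧ θ' k ≤ 1) →
        (∀ k ∈ s, 0 < θ' k → 0 < θ k) →
        (∑ k ∈ s, θ' k) = ∑ k ∈ s, θ k →
        (∑ k ∈ s, ((1 - θ' k) * c0 k + θ' k * c1 k))
          ≤ ∑ k ∈ s, ((1 - θ k) * c0 k + θ k * c1 k) →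
        ∃ b0 b1 : ℕ → ℕ,
          (∀ k ∈ s, b0 k ≤ 1 ∧ (b0 k = 1 → 0 < θ k)) ∧
          (∀ k ∈ s, b1 k ≤ 1 ∧ (b1 k = 1 → 0 < θ k)) ∧
          (∑ k ∈ s, b0 k) = ⌊∑ k ∈ s, θ k⌋₊ ∧
          (∑ k ∈ s, b1 k) = ⌈∑ k ∈ s, θ k⌉₊ ∧
          (1 - (∑ k ∈ s, θ k - (⌊∑ k ∈ s, θ k⌋₊ : ℝ))) *
              (∑ k ∈ s, (if b0 k = 1 then c1 k else c0 k))
            + (∑ k ∈ s, θ k - (⌊∑ k ∈ s, θ k⌋₊ : ℝ)) *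
              (∑ k ∈ s, (if b1 k = 1 then c1 k else c0 k))
            ≤ ∑ k ∈ s, ((1 - θ k) * c0 k + θ k * c1 k) := by
      intro θ' h1 h2 h3 h4 h5
      obtain ⟨b0, b1, hb0, hb1, hs0, hs1, hineq⟩ := ih θ' h1 h2
      refine ⟨b0, b1,
        fun k hk => ⟨(hb0 k hk).1, fun h => h3 k hk ((hb0 k hk).2 h)⟩,
        fun k hk => ⟨(hb1 k hk).1, fun h => h3 k hk ((hb1 k hk).2 h)⟩,
        by rw [← h4]; exact hs0, by rw [← h4]; exact hs1, ?_⟩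
      rw [← h4]
      exact le_trans hineq h5
    rcases Nat.eq_zero_or_pos n with hn0 | hnpos
    · -- exactly one fractional index
      subst hn0
      obtain ⟨i, hFi⟩ := Finset.card_eq_one.mp hFcard
      have hiF : i ∈ s.filter fun k => 0 < θ k ∧ θ k < 1 := by
        rw [hFi]; exact Finset.mem_singleton_self i
      obtain ⟨hi, hθi, hθi1⟩ := Finset.mem_filter.mp hiF
      have hrest : ∀ k ∈ s, k ≠ i → θ k = 0 ∨ θ k = 1 := by
        intro k hk hki
        have hnm : k ∉ s.filter fun k => 0 < θ k ∧ θ k < 1 := by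
          rw [hFi]; simp [hki]
        rcases (hθ k hk).1.lt_or_eq with h | h
        · rcases (hθ k hk).2.lt_or_eq with h' | h'
          · exact absurd (Finset.mem_filter.mpr ⟨hk, h, h'⟩) hnm
          · right; exact h'
        · left; exact h.symm
      set b0 : ℕ → ℕ := fun k => if 1 ≤ θ k then 1 else 0 with hb0
      set b1 : ℕ → ℕ := fun k => if k = i then 1 else b0 k with hb1
      have hb0i : b0 i = 0 := by
        have h' : ¬ (1:ℝ) ≤ θ i := not_le.mpr hθi1
        simp [hb0, h']
      have hb1i : b1 i = 1 := by simp [hb1]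
      have hb1o : ∀ k, k ≠ i → b1 k = b0 k := by
        intro k h; simp [hb1, h]
      have hval : ∀ k ∈ s.erase i, ((b0 k : ℕ) : ℝ) = θ k := by
        intro k hk
        obtain ⟨hki, hks⟩ := Finset.mem_erase.mp hk
        rcases hrest k hks hki with h | h <;> norm_num [hb0, h]
      have hs0e : ∑ k ∈ s, b0 k = ∑ k ∈ s.erase i, b0 k := by
        rw [← Finset.add_sum_erase _ b0 hi, hb0i, zero_add]
      have hsum0 : ∑ k ∈ s.erase i, θ k = ((∑ k ∈ s.erase i, b0 k : ℕ) : ℝ) := by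
        rw [Nat.cast_sum]; exact (Finset.sum_congr rfl hval).symm
      have hsum : ∑ k ∈ s, θ k = θ i + ((∑ k ∈ s, b0 k : ℕ) : ℝ) := by
        rw [← Finset.add_sum_erase _ θ hi, hsum0, hs0e]
      have hfloor : ⌊∑ k ∈ s, θ k⌋₊ = ∑ k ∈ s, b0 k := by
        rw [hsum, Nat.floor_add_natCast hθi.le, Nat.floor_eq_zero.mpr hθi1, zero_add]
      have hceil : ⌈∑ k ∈ s, θ k⌉₊ = ∑ k ∈ s, b0 k + 1 := by
        rw [hsum, Nat.ceil_add_natCast hθi.le]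
        have hc1 : ⌈θ i⌉₊ = 1 := by
          refine le_antisymm ?_ ?_
          · refine Nat.ceil_le.mpr ?_
            push_cast; linarith
          · exact Nat.one_le_ceil_iff.mpr hθi
        rw [hc1]; omega
      have hs1sum : ∑ k ∈ s, b1 k = ∑ k ∈ s, b0 k + 1 := by
        rw [← Finset.add_sum_erase _ b1 hi, hb1i,
          Finset.sum_congr rfl (fun k hk => hb1o k (Finset.mem_erase.mp hk).1), ← hs0e]
        omega
      have hb0le : ∀ k ∈ s, b0 k ≤ 1 ∧ (b0 k = 1 → 0 < θ k) := by
        intro k hk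
        constructor
        · simp [hb0]; split <;> omega
        · intro h1
          by_contra h2
          push_neg at h2
          have hθk0 : θ k = 0 := le_antisymm h2 (hθ k hk).1
          rw [hb0] at h1
          norm_num [hθk0] at h1
      have hb1le : ∀ k ∈ s, b1 k ≤ 1 ∧ (b1 k = 1 → 0 < θ k) := by
        intro k hk
        by_cases hki : k = i
        · subst hki; rw [hb1i]; exact ⟨le_refl 1, fun _ => hθi⟩
        · rw [hb1o k hki]; exact hb0le k hk
      refine ⟨b0, b1, hb0le, hb1le, hfloor.symm, by rw [hceil]; exact hs1sum, ?_⟩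
      have hτ : (∑ k ∈ s, θ k) - ((⌊∑ k ∈ s, θ k⌋₊ : ℕ) : ℝ) = θ i := by
        rw [hfloor, hsum]; ring
      rw [hτ]
      have hA : ∀ k ∈ s.erase i,
          (if b1 k = 1 then c1 k else c0 k) = (if b0 k = 1 then c1 k else c0 k) := by
        intro k hk
        rw [hb1o k (Finset.mem_erase.mp hk).1]
      have hsplit0 : (∑ k ∈ s, if b0 k = 1 then c1 k else c0 k)
          = c0 i + ∑ k ∈ s.erase i, (if b0 k = 1 then c1 k else c0 k) := by
        rw [← Finset.add_sum_erase _ _ hi, hb0i]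
        norm_num
      have hsplit1 : (∑ k ∈ s, if b1 k = 1 then c1 k else c0 k)
          = c1 i + ∑ k ∈ s.erase i, (if b0 k = 1 then c1 k else c0 k) := by
        rw [← Finset.add_sum_erase _ _ hi, hb1i, Finset.sum_congr rfl hA]
        norm_num
      have hRHS : (∑ k ∈ s, ((1 - θ k) * c0 k + θ k * c1 k))
          = ((1 - θ i) * c0 i + θ i * c1 i)
            + ∑ k ∈ s.erase i, (if b0 k = 1 then c1 k else c0 k) := by
        rw [← Finset.add_sum_erase _ _ hi]
        congr 1
        refine Finset.sum_congr rfl fun k hk => ?_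
        obtain ⟨hki, hks⟩ := Finset.mem_erase.mp hk
        rcases hrest k hks hki with h | h
        · have hbk : b0 k = 0 := by simp [hb0, h]
          rw [hbk]; norm_num [h]
        · have hbk : b0 k = 1 := by simp [hb0, h]
          rw [hbk]; norm_num [h]
      rw [hsplit0, hsplit1, hRHS]
      apply le_of_eq
      ring
    · -- two fractional indices: pipage
      have h2card : 1 < (s.filter fun k => 0 < θ k ∧ θ k < 1).card := by omega
      obtain ⟨i, hiF, j, hjF, hij⟩ := Finset.one_lt_card.mp h2card
      obtain ⟨hi, hθi, hθi1⟩ := Finset.mem_filter.mp hiF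
      obtain ⟨hj, hθj, hθj1⟩ := Finset.mem_filter.mp hjF
      set δp := min (1 - θ i) (θ j) with hδpdef
      set δm := min (θ i) (1 - θ j) with hδmdef
      have hδp : 0 < δp := lt_min (by linarith) (by linarith)
      have hδm : 0 < δm := lt_min (by linarith) (by linarith)
      have hδp1 : δp ≤ 1 - θ i := min_le_left _ _
      have hδp2 : δp ≤ θ j := min_le_right _ _
      have hδm1 : δm ≤ θ i := min_le_left _ _
      have hδm2 : δm ≤ 1 - θ j := min_le_right _ _
      set θp := fun k => if k = i then θ i + δp else if k = j then θ j - δp else θ k with hθpdef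
      set θm := fun k => if k = i then θ i + (-δm) else if k = j then θ j - (-δm) else θ k
        with hθmdef
      have sump : (∑ k ∈ s, θp k) = ∑ k ∈ s, θ k := sum_update_pair hi hj hij θ δp
      have summ : (∑ k ∈ s, θm k) = ∑ k ∈ s, θ k := sum_update_pair hi hj hij θ (-δm)
      have hθpi : θp i = θ i + δp := by simp [hθpdef]
      have hθpj : θp j = θ j - δp := by simp [hθpdef, hij.symm]
      have hθmi : θm i = θ i - δm := by simp [hθmdef]; ring
      have hθmj : θm j = θ j + δm := by simp [hθmdef, hij.symm]
      have hθpo : ∀ k, k ≠ i → k ≠ j → θp k = θ k := by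
        intro k h1 h2; simp [hθpdef, h1, h2]
      have hθmo : ∀ k, k ≠ i → k ≠ j → θm k = θ k := by
        intro k h1 h2; simp [hθmdef, h1, h2]
      have hboundp : ∀ k ∈ s, 0 ≤ θp k ∧ θp k ≤ 1 := by
        intro k hk
        by_cases h1 : k = i
        · subst h1; rw [hθpi]; constructor <;> linarith
        by_cases h2 : k = j
        · subst h2; rw [hθpj]; constructor <;> linarith
        · rw [hθpo k h1 h2]; exact hθ k hk
      have hboundm : ∀ k ∈ s, 0 ≤ θm k ∧ θm k ≤ 1 := by
        intro k hk
        by_cases h1 : k = i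
        · subst h1; rw [hθmi]; constructor <;> linarith
        by_cases h2 : k = j
        · subst h2; rw [hθmj]; constructor <;> linarith
        · rw [hθmo k h1 h2]; exact hθ k hk
      have hsuppp : ∀ k ∈ s, 0 < θp k → 0 < θ k := by
        intro k hk _
        by_cases h1 : k = i; · subst h1; exact hθi
        by_cases h2 : k = j; · subst h2; exact hθj
        · rwa [hθpo k h1 h2] at *
      have hsuppm : ∀ k ∈ s, 0 < θm k → 0 < θ k := by
        intro k hk _
        by_cases h1 : k = i; · subst h1; exact hθi
        by_cases h2 : k = j; · subst h2; exact hθj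
        · rwa [hθmo k h1 h2] at *
      -- card bounds
      have hcardp : (s.filter fun k => 0 < θp k ∧ θp k < 1).card ≤ n := by
        rcases min_cases (1 - θ i) (θ j) with ⟨hmin, _⟩ | ⟨hmin, _⟩
        · -- θp i = 1, drop i
          have hsub : (s.filter fun k => 0 < θp k ∧ θp k < 1)
              ⊆ (s.filter fun k => 0 < θ k ∧ θ k < 1).erase i := by
            intro k hk
            obtain ⟨hks, hk1, hk2⟩ := Finset.mem_filter.mp hk
            have hki : k ≠ i := by
              intro h; subst h
              have hδpe : δp = 1 - θ k := hδpdef.trans hmin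
              rw [hθpi] at hk2; linarith
            refine Finset.mem_erase.mpr ⟨hki, Finset.mem_filter.mpr ⟨hks, ?_⟩⟩
            by_cases h2 : k = j
            · subst h2; exact ⟨hθj, hθj1⟩
            · rw [hθpo k hki h2] at hk1 hk2; exact ⟨hk1, hk2⟩
          calc (s.filter fun k => 0 < θp k ∧ θp k < 1).card
              ≤ ((s.filter fun k => 0 < θ k ∧ θ k < 1).erase i).card :=
                Finset.card_le_card hsub
            _ = n := by rw [Finset.card_erase_of_mem hiF, hFcard]; omega
        · -- θp j = 0, drop j
          have hsub : (s.filter fun k => 0 < θp k ∧ θp k < 1)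
              ⊆ (s.filter fun k => 0 < θ k ∧ θ k < 1).erase j := by
            intro k hk
            obtain ⟨hks, hk1, hk2⟩ := Finset.mem_filter.mp hk
            have hkj : k ≠ j := by
              intro h; subst h
              have hδpe : δp = θ k := hδpdef.trans hmin
              rw [hθpj] at hk1; linarith
            refine Finset.mem_erase.mpr ⟨hkj, Finset.mem_filter.mpr ⟨hks, ?_⟩⟩
            by_cases h1 : k = i
            · subst h1; exact ⟨hθi, hθi1⟩
            · rw [hθpo k h1 hkj] at hk1 hk2; exact ⟨hk1, hk2⟩
          calc (s.filter fun k => 0 < θp k ∧ θp k < 1).card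
              ≤ ((s.filter fun k => 0 < θ k ∧ θ k < 1).erase j).card :=
                Finset.card_le_card hsub
            _ = n := by rw [Finset.card_erase_of_mem hjF, hFcard]; omega
      have hcardm : (s.filter fun k => 0 < θm k ∧ θm k < 1).card ≤ n := by
        rcases min_cases (θ i) (1 - θ j) with ⟨hmin, _⟩ | ⟨hmin, _⟩
        · have hsub : (s.filter fun k => 0 < θm k ∧ θm k < 1)
              ⊆ (s.filter fun k => 0 < θ k ∧ θ k < 1).erase i := by
            intro k hk
            obtain ⟨hks, hk1, hk2⟩ := Finset.mem_filter.mp hk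
            have hki : k ≠ i := by
              intro h; subst h
              have hδme : δm = θ k := hδmdef.trans hmin
              rw [hθmi] at hk1; linarith
            refine Finset.mem_erase.mpr ⟨hki, Finset.mem_filter.mpr ⟨hks, ?_⟩⟩
            by_cases h2 : k = j
            · subst h2; exact ⟨hθj, hθj1⟩
            · rw [hθmo k hki h2] at hk1 hk2; exact ⟨hk1, hk2⟩
          calc (s.filter fun k => 0 < θm k ∧ θm k < 1).card
              ≤ ((s.filter fun k => 0 < θ k ∧ θ k < 1).erase i).card :=
                Finset.card_le_card hsub
            _ = n := by rw [Finset.card_erase_of_mem hiF, hFcard]; omega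
        · have hsub : (s.filter fun k => 0 < θm k ∧ θm k < 1)
              ⊆ (s.filter fun k => 0 < θ k ∧ θ k < 1).erase j := by
            intro k hk
            obtain ⟨hks, hk1, hk2⟩ := Finset.mem_filter.mp hk
            have hkj : k ≠ j := by
              intro h; subst h
              have hδme : δm = 1 - θ k := hδmdef.trans hmin
              rw [hθmj] at hk2; linarith
            refine Finset.mem_erase.mpr ⟨hkj, Finset.mem_filter.mpr ⟨hks, ?_⟩⟩
            by_cases h1 : k = i
            · subst h1; exact ⟨hθi, hθi1⟩
            · rw [hθmo k h1 hkj] at hk1 hk2; exact ⟨hk1, hk2⟩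
          calc (s.filter fun k => 0 < θm k ∧ θm k < 1).card
              ≤ ((s.filter fun k => 0 < θ k ∧ θ k < 1).erase j).card :=
                Finset.card_le_card hsub
            _ = n := by rw [Finset.card_erase_of_mem hjF, hFcard]; omega
      -- convexity of the RHS
      set lam := δm / (δp + δm) with hlamdef
      have hne : δp + δm ≠ 0 := by positivity
      have hlam0 : 0 ≤ lam := by positivity
      have hlam1 : lam ≤ 1 := by
        rw [hlamdef, div_le_one (by positivity)]; linarith
      have hpoint : ∀ k, lam * θp k + (1 - lam) * θm k = θ k := by
        intro k
        by_cases h1 : k = i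
        · subst h1; rw [hθpi, hθmi, hlamdef]; field_simp; ring
        by_cases h2 : k = j
        · subst h2; rw [hθpj, hθmj, hlamdef]; field_simp; ring
        · rw [hθpo k h1 h2, hθmo k h1 h2]; ring
      have hconv : lam * (∑ k ∈ s, ((1 - θp k) * c0 k + θp k * c1 k))
          + (1 - lam) * (∑ k ∈ s, ((1 - θm k) * c0 k + θm k * c1 k))
          = ∑ k ∈ s, ((1 - θ k) * c0 k + θ k * c1 k) := by
        rw [Finset.mul_sum, Finset.mul_sum, ← Finset.sum_add_distrib]
        refine Finset.sum_congr rfl fun k _ => ?_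
        linear_combination (c1 k - c0 k) * hpoint k
      rcases le_total (∑ k ∈ s, ((1 - θp k) * c0 k + θp k * c1 k))
          (∑ k ∈ s, ((1 - θm k) * c0 k + θm k * c1 k)) with h | h
      · refine key θp hcardp hboundp hsuppp sump ?_
        nlinarith [hconv, h, hlam0, hlam1]
      · refine key θm hcardm hboundm hsuppm summ ?_
        nlinarith [hconv, h, hlam0, hlam1]

lemma sum_indicator {u t : Finset ι} (h : t ⊆ u) :
    ∑ ℓ ∈ u, (if ℓ ∈ t then (1:ℕ) else 0) = t.card := by
  rw [Finset.sum_ite_mem, Finset.inter_eq_right.mpr h, Finset.sum_const, smul_eq_mul, mul_one]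


lemma cost_eq_sum (ls : List (Level ι)) (u : Finset ι) (z : ι → ℝ) :
    cost ls u z = (ls.map (fun lv => lcost u lv z)).sum := by
  induction ls with
  | nil => rfl
  | cons lv ls ih => rw [cost, ih, List.map_cons, List.sum_cons]


lemma roundD (ls : List (Level ι)) (hls : ls.Pairwise (Coarser (ι := ι))) :
    ∀ (u : Finset ι) (z : ι → ℝ), (∀ ℓ ∈ u, 0 ≤ z ℓ ∧ z ℓ ≤ 1) →
    ∃ z0 z1 : ι → ℕ,
      (∀ ℓ ∈ u, z0 ℓ ≤ 1) ∧ (∀ ℓ ∈ u, z1 ℓ ≤ 1) ∧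
      (∑ ℓ ∈ u, z0 ℓ) = ⌊∑ ℓ ∈ u, z ℓ⌋₊ ∧
      (∑ ℓ ∈ u, z1 ℓ) = ⌈∑ ℓ ∈ u, z ℓ⌉₊ ∧
      (1 - ((∑ ℓ ∈ u, z ℓ) - ((⌊∑ ℓ ∈ u, z ℓ⌋₊ : ℕ) : ℝ))) * cost ls u (fun ℓ => (z0 ℓ : ℝ))
        + ((∑ ℓ ∈ u, z ℓ) - ((⌊∑ ℓ ∈ u, z ℓ⌋₊ : ℕ) : ℝ)) * cost ls u (fun ℓ => (z1 ℓ : ℝ))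
        ≤ cost ls u z := by
  induction ls with
  | nil =>
    intro u z hz
    have hm0 : 0 ≤ ∑ ℓ ∈ u, z ℓ := Finset.sum_nonneg fun ℓ hℓ => (hz ℓ hℓ).1
    have hmcard : (∑ ℓ ∈ u, z ℓ) ≤ (u.card : ℝ) := by
      calc (∑ ℓ ∈ u, z ℓ) ≤ ∑ ℓ ∈ u, (1:ℝ) :=
        Finset.sum_le_sum fun ℓ hℓ => (hz ℓ hℓ).2
      _ = (u.card : ℝ) := by simp
    have hfle : ⌊∑ ℓ ∈ u, z ℓ⌋₊ ≤ u.card := by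
      have := Nat.floor_le_floor hmcard
      rwa [Nat.floor_natCast] at this
    have hcle : ⌈∑ ℓ ∈ u, z ℓ⌉₊ ≤ u.card := Nat.ceil_le.mpr hmcard
    obtain ⟨t0, ht0u, ht0c⟩ := Finset.exists_subset_card_eq hfle
    obtain ⟨t1, ht1u, ht1c⟩ := Finset.exists_subset_card_eq hcle
    refine ⟨fun ℓ => if ℓ ∈ t0 then 1 else 0, fun ℓ => if ℓ ∈ t1 then 1 else 0,
      fun ℓ _ => by by_cases h : ℓ ∈ t0 <;> simp [h], fun ℓ _ => by by_cases h : ℓ ∈ t1 <;> simp [h],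
      by rw [sum_indicator ht0u, ht0c], by rw [sum_indicator ht1u, ht1c], ?_⟩
    show (1 - _) * (0:ℝ) + _ * (0:ℝ) ≤ (0:ℝ)
    ring_nf
    exact le_refl 0
  | cons lv tl IH =>
    intro u z hz
    rw [List.pairwise_cons] at hls
    obtain ⟨hpair, htl⟩ := hls
    have IH' := IH htl
    -- per-class data
    set C : ℕ → Finset ι := fun k => u.filter (fun ℓ => lv.1 ℓ = k) with hC
    have hCsub : ∀ k, C k ⊆ u := fun k => Finset.filter_subset _ _
    have hzC : ∀ k, ∀ ℓ ∈ C k, 0 ≤ z ℓ ∧ z ℓ ≤ 1 := fun k ℓ hℓ => hz ℓ (hCsub k hℓ)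
    have H := fun k => IH' (C k) z (hzC k)
    choose f0 f1 hf0 hf1 hs0 hs1 hineq using H
    set mk : ℕ → ℝ := fun k => ∑ ℓ ∈ C k, z ℓ with hmk
    set θk : ℕ → ℝ := fun k => mk k - ((⌊mk k⌋₊ : ℕ) : ℝ) with hθk
    have hmk0 : ∀ k, 0 ≤ mk k := fun k => Finset.sum_nonneg fun ℓ hℓ => (hzC k ℓ hℓ).1
    have hθbound : ∀ k ∈ u.image lv.1, 0 ≤ θk k ∧ θk k ≤ 1 := by
      intro k _
      constructor
      · have := Nat.floor_le (hmk0 k)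
        simp only [hθk]; linarith
      · have := Nat.lt_floor_add_one (mk k)
        simp only [hθk]; linarith
    set c0f : ℕ → ℝ := fun k =>
      |((⌊mk k⌋₊ : ℕ) : ℝ) - (lv.2 k : ℝ)| + cost tl (C k) (fun ℓ => (f0 k ℓ : ℝ)) with hc0f
    set c1f : ℕ → ℝ := fun k =>
      |((⌈mk k⌉₊ : ℕ) : ℝ) - (lv.2 k : ℝ)| + cost tl (C k) (fun ℓ => (f1 k ℓ : ℝ)) with hc1f
    -- apply roundE
    obtain ⟨b0, b1, hb0, hb1, hbs0, hbs1, hbineq⟩ :=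
      roundE c0f c1f (u.image lv.1) (u.image lv.1).card θk
        (Finset.card_filter_le _ _) hθbound
    -- glue
    set g0 : ι → ℕ := fun ℓ => if b0 (lv.1 ℓ) = 1 then f1 (lv.1 ℓ) ℓ else f0 (lv.1 ℓ) ℓ with hg0
    set g1 : ι → ℕ := fun ℓ => if b1 (lv.1 ℓ) = 1 then f1 (lv.1 ℓ) ℓ else f0 (lv.1 ℓ) ℓ with hg1
    have hmemC : ∀ ℓ ∈ u, ℓ ∈ C (lv.1 ℓ) := by
      intro ℓ hℓ
      rw [hC]; exact Finset.mem_filter.mpr ⟨hℓ, rfl⟩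
    have hg0val : ∀ k, ∀ ℓ ∈ C k, g0 ℓ = if b0 k = 1 then f1 k ℓ else f0 k ℓ := by
      intro k ℓ hℓ
      have : lv.1 ℓ = k := (Finset.mem_filter.mp hℓ).2
      rw [hg0]; simp only [this]
    have hg1val : ∀ k, ∀ ℓ ∈ C k, g1 ℓ = if b1 k = 1 then f1 k ℓ else f0 k ℓ := by
      intro k ℓ hℓ
      have : lv.1 ℓ = k := (Finset.mem_filter.mp hℓ).2
      rw [hg1]; simp only [this]
    have hg0le : ∀ ℓ ∈ u, g0 ℓ ≤ 1 := by
      intro ℓ hℓ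
      rw [hg0val (lv.1 ℓ) ℓ (hmemC ℓ hℓ)]
      split
      · exact hf1 (lv.1 ℓ) ℓ (hmemC ℓ hℓ)
      · exact hf0 (lv.1 ℓ) ℓ (hmemC ℓ hℓ)
    have hg1le : ∀ ℓ ∈ u, g1 ℓ ≤ 1 := by
      intro ℓ hℓ
      rw [hg1val (lv.1 ℓ) ℓ (hmemC ℓ hℓ)]
      split
      · exact hf1 (lv.1 ℓ) ℓ (hmemC ℓ hℓ)
      · exact hf0 (lv.1 ℓ) ℓ (hmemC ℓ hℓ)
    -- fiberwise sums
    have hmapsto : ∀ ℓ ∈ u, lv.1 ℓ ∈ u.image lv.1 := fun ℓ hℓ => Finset.mem_image_of_mem _ hℓ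
    have hfibz : (∑ ℓ ∈ u, z ℓ) = ∑ k ∈ u.image lv.1, mk k :=
      (Finset.sum_fiberwise_of_maps_to hmapsto z).symm
    have hfib0 : (∑ ℓ ∈ u, g0 ℓ) = ∑ k ∈ u.image lv.1, ∑ ℓ ∈ C k, g0 ℓ :=
      (Finset.sum_fiberwise_of_maps_to hmapsto g0).symm
    have hfib1 : (∑ ℓ ∈ u, g1 ℓ) = ∑ k ∈ u.image lv.1, ∑ ℓ ∈ C k, g1 ℓ :=
      (Finset.sum_fiberwise_of_maps_to hmapsto g1).symm
    -- ceil = floor + 1 on fractional classes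
    have hceilf : ∀ k, 0 < θk k → ⌈mk k⌉₊ = ⌊mk k⌋₊ + 1 := by
      intro k hpos
      have hflt : ((⌊mk k⌋₊ : ℕ) : ℝ) < mk k := by simp only [hθk] at hpos; linarith
      have hclt : mk k < ((⌊mk k⌋₊ : ℕ) : ℝ) + 1 := Nat.lt_floor_add_one (mk k)
      refine le_antisymm ?_ ?_
      · refine Nat.ceil_le.mpr ?_
        push_cast; linarith
      · refine Nat.succ_le_of_lt ?_
        rw [Nat.lt_ceil]
        exact hflt
    have hceilz : ∀ k, ¬ 0 < θk k → ⌈mk k⌉₊ = ⌊mk k⌋₊ := by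
      intro k hpos
      have h0 : 0 ≤ θk k := by
        have := Nat.floor_le (hmk0 k); simp only [hθk]; linarith
      have heq : mk k = ((⌊mk k⌋₊ : ℕ) : ℝ) := by
        simp only [hθk] at hpos h0; push_neg at hpos; linarith
      rw [heq, Nat.ceil_natCast, Nat.floor_natCast]
    -- class sums of g0, g1
    have hclass0 : ∀ k ∈ u.image lv.1,
        (∑ ℓ ∈ C k, g0 ℓ) = ⌊mk k⌋₊ + b0 k := by
      intro k hk
      by_cases hb : b0 k = 1
      · rw [Finset.sum_congr rfl (fun ℓ hℓ => (hg0val k ℓ hℓ).trans (if_pos hb)), hs1 k,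
          hceilf k ((hb0 k hk).2 hb), hb]
      · have hb' : b0 k = 0 := by have := (hb0 k hk).1; omega
        rw [Finset.sum_congr rfl (fun ℓ hℓ => (hg0val k ℓ hℓ).trans (if_neg hb)), hs0 k, hb']
        exact (add_zero _).symm
    have hclass1 : ∀ k ∈ u.image lv.1,
        (∑ ℓ ∈ C k, g1 ℓ) = ⌊mk k⌋₊ + b1 k := by
      intro k hk
      by_cases hb : b1 k = 1
      · rw [Finset.sum_congr rfl (fun ℓ hℓ => (hg1val k ℓ hℓ).trans (if_pos hb)), hs1 k,
          hceilf k ((hb1 k hk).2 hb), hb]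
      · have hb' : b1 k = 0 := by have := (hb1 k hk).1; omega
        rw [Finset.sum_congr rfl (fun ℓ hℓ => (hg1val k ℓ hℓ).trans (if_neg hb)), hs0 k, hb']
        exact (add_zero _).symm
    -- total sum identities
    set Θ : ℝ := ∑ k ∈ u.image lv.1, θk k with hΘ
    have hΘ0 : 0 ≤ Θ := Finset.sum_nonneg fun k hk => (hθbound k hk).1
    have htot : (∑ ℓ ∈ u, z ℓ) = Θ + ((∑ k ∈ u.image lv.1, ⌊mk k⌋₊ : ℕ) : ℝ) := by
      rw [hfibz, hΘ, Nat.cast_sum, ← Finset.sum_add_distrib]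
      refine Finset.sum_congr rfl fun k _ => ?_
      simp only [hθk]; ring
    have hfloor_tot : ⌊∑ ℓ ∈ u, z ℓ⌋₊ = ⌊Θ⌋₊ + ∑ k ∈ u.image lv.1, ⌊mk k⌋₊ := by
      rw [htot, Nat.floor_add_natCast hΘ0]
    have hceil_tot : ⌈∑ ℓ ∈ u, z ℓ⌉₊ = ⌈Θ⌉₊ + ∑ k ∈ u.image lv.1, ⌊mk k⌋₊ := by
      rw [htot, Nat.ceil_add_natCast hΘ0]
    have hsum_g0 : (∑ ℓ ∈ u, g0 ℓ) = ⌊∑ ℓ ∈ u, z ℓ⌋₊ := by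
      rw [hfib0, Finset.sum_congr rfl hclass0, Finset.sum_add_distrib, hbs0, hfloor_tot]
      omega
    have hsum_g1 : (∑ ℓ ∈ u, g1 ℓ) = ⌈∑ ℓ ∈ u, z ℓ⌉₊ := by
      rw [hfib1, Finset.sum_congr rfl hclass1, Finset.sum_add_distrib, hbs1, hceil_tot]
      omega
    -- fractional parts agree
    have hτ : (∑ ℓ ∈ u, z ℓ) - ((⌊∑ ℓ ∈ u, z ℓ⌋₊ : ℕ) : ℝ) = Θ - ((⌊Θ⌋₊ : ℕ) : ℝ) := by
      rw [hfloor_tot, htot]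
      push_cast
      ring
    -- cost of glued functions
    have hcost_g0 : cost (lv :: tl) u (fun ℓ => (g0 ℓ : ℝ))
        = ∑ k ∈ u.image lv.1, (if b0 k = 1 then c1f k else c0f k) := by
      rw [cost_decomp lv tl u hpair]
      refine Finset.sum_congr rfl fun k hk => ?_
      have hcast : (∑ ℓ ∈ C k, ((g0 ℓ : ℕ) : ℝ)) = ((∑ ℓ ∈ C k, g0 ℓ : ℕ) : ℝ) :=
        (Nat.cast_sum _ _).symm
      by_cases hb : b0 k = 1
      · have hcc : cost tl (C k) (fun ℓ => (g0 ℓ : ℝ)) = cost tl (C k) (fun ℓ => (f1 k ℓ : ℝ)) := by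
          refine cost_congr tl (C k) fun ℓ hℓ => ?_
          rw [hg0val k ℓ hℓ, if_pos hb]
        rw [if_pos hb, hc1f]
        have hsumval : (∑ ℓ ∈ C k, ((g0 ℓ : ℕ) : ℝ)) = ((⌈mk k⌉₊ : ℕ) : ℝ) := by
          rw [hcast, hclass0 k hk, hb, hceilf k ((hb0 k hk).2 hb)]
          try push_cast
          try ring
        rw [show (u.filter (fun ℓ => lv.1 ℓ = k)) = C k from rfl, hsumval, hcc]
      · have hb' : b0 k = 0 := by have := (hb0 k hk).1; omega
        have hcc : cost tl (C k) (fun ℓ => (g0 ℓ : ℝ)) = cost tl (C k) (fun ℓ => (f0 k ℓ : ℝ)) := by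
          refine cost_congr tl (C k) fun ℓ hℓ => ?_
          rw [hg0val k ℓ hℓ, if_neg hb]
        rw [if_neg hb, hc0f]
        have hsumval : (∑ ℓ ∈ C k, ((g0 ℓ : ℕ) : ℝ)) = ((⌊mk k⌋₊ : ℕ) : ℝ) := by
          rw [hcast, hclass0 k hk, hb']
          try push_cast
          try ring
        rw [show (u.filter (fun ℓ => lv.1 ℓ = k)) = C k from rfl, hsumval, hcc]
    have hcost_g1 : cost (lv :: tl) u (fun ℓ => (g1 ℓ : ℝ))
        = ∑ k ∈ u.image lv.1, (if b1 k = 1 then c1f k else c0f k) := by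
      rw [cost_decomp lv tl u hpair]
      refine Finset.sum_congr rfl fun k hk => ?_
      have hcast : (∑ ℓ ∈ C k, ((g1 ℓ : ℕ) : ℝ)) = ((∑ ℓ ∈ C k, g1 ℓ : ℕ) : ℝ) :=
        (Nat.cast_sum _ _).symm
      by_cases hb : b1 k = 1
      · have hcc : cost tl (C k) (fun ℓ => (g1 ℓ : ℝ)) = cost tl (C k) (fun ℓ => (f1 k ℓ : ℝ)) := by
          refine cost_congr tl (C k) fun ℓ hℓ => ?_
          rw [hg1val k ℓ hℓ, if_pos hb]
        rw [if_pos hb, hc1f]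
        have hsumval : (∑ ℓ ∈ C k, ((g1 ℓ : ℕ) : ℝ)) = ((⌈mk k⌉₊ : ℕ) : ℝ) := by
          rw [hcast, hclass1 k hk, hb, hceilf k ((hb1 k hk).2 hb)]
          try push_cast
          try ring
        rw [show (u.filter (fun ℓ => lv.1 ℓ = k)) = C k from rfl, hsumval, hcc]
      · have hb' : b1 k = 0 := by have := (hb1 k hk).1; omega
        have hcc : cost tl (C k) (fun ℓ => (g1 ℓ : ℝ)) = cost tl (C k) (fun ℓ => (f0 k ℓ : ℝ)) := by
          refine cost_congr tl (C k) fun ℓ hℓ => ?_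
          rw [hg1val k ℓ hℓ, if_neg hb]
        rw [if_neg hb, hc0f]
        have hsumval : (∑ ℓ ∈ C k, ((g1 ℓ : ℕ) : ℝ)) = ((⌊mk k⌋₊ : ℕ) : ℝ) := by
          rw [hcast, hclass1 k hk, hb']
          try push_cast
          try ring
        rw [show (u.filter (fun ℓ => lv.1 ℓ = k)) = C k from rfl, hsumval, hcc]
    -- cost of z from below
    have hcost_z : ∑ k ∈ u.image lv.1, ((1 - θk k) * c0f k + θk k * c1f k)
        ≤ cost (lv :: tl) u z := by
      rw [cost_decomp lv tl u hpair]
      refine Finset.sum_le_sum fun k hk => ?_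
      have habs := abs_interp (mk k) (hmk0 k) (lv.2 k)
      have hic := hineq k
      simp only [hc0f, hc1f]
      have hmkdef : (∑ ℓ ∈ u.filter (fun ℓ => lv.1 ℓ = k), z ℓ) = mk k := rfl
      rw [hmkdef]
      simp only [hθk] at *
      nlinarith [hic, habs]
    refine ⟨g0, g1, hg0le, hg1le, hsum_g0, hsum_g1, ?_⟩
    rw [hτ, hcost_g0, hcost_g1]
    exact le_trans hbineq hcost_z


end LPIP

open LPIP Finset

/-- With nested covariates and `T ≤ L`, the LP relaxation solves the integer program:
the infimum of `∑ p ∑ k, v p k` over the polyhedron `Q` equals the minimum total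
imbalance over binary selection vectors `z` summing to `T`. -/
theorem LP_solves_IP_nested_covariates
    (T L P : ℕ) (hT : 0 < T) (hL : 0 < L) (hTL : T ≤ L)
    (K : Fin P → ℕ) (hK : ∀ p, 0 < K p)
    (c : ∀ p : Fin P, Fin L → Fin (K p))
    (hnested : ∀ i j : Fin P, i < j → ∀ k : Fin (K j),
      ∃ k' : Fin (K i), ∀ ℓ, c j ℓ = k → c i ℓ = k')
    (N : ∀ p : Fin P, Fin (K p) → ℕ)
    (hN : ∀ p, ∑ k, N p k = T)
    (Q : Set ((Fin L → ℝ) × (∀ p : Fin P, Fin (K p) → ℝ)))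
    (hQ : Q = {zv | (∀ ℓ, 0 ≤ zv.1 ℓ ∧ zv.1 ℓ ≤ 1) ∧
      (∑ ℓ, zv.1 ℓ) = (T : ℝ) ∧
      ∀ p k, |(∑ ℓ ∈ Finset.univ.filter (fun ℓ => c p ℓ = k), zv.1 ℓ) - (N p k : ℝ)|
        ≤ zv.2 p k}) :
    sInf {val : ℝ | ∃ zv ∈ Q, val = ∑ p, ∑ k, zv.2 p k}
    = sInf {val : ℝ | ∃ z : Fin L → ℕ,
        (∀ ℓ, z ℓ = 0 ∨ z ℓ = 1) ∧
        (∑ ℓ, z ℓ) = T ∧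
        val = ∑ p, ∑ k,
          |(∑ ℓ ∈ Finset.univ.filter (fun ℓ => c p ℓ = k), (z ℓ : ℝ)) - (N p k : ℝ)|} := by
  classical
  -- the list of levels
  set lvl : Fin P → Level (Fin L) := fun p =>
    (fun ℓ => ((c p ℓ : ℕ)), fun k => if h : k < K p then ((N p ⟨k, h⟩ : ℕ) : ℤ) else 0)
    with hlvl
  set ls : List (Level (Fin L)) := (List.finRange P).map lvl with hlsdef
  have hpw : ls.Pairwise (Coarser (ι := Fin L)) := by
    rw [hlsdef, List.pairwise_map]
    refine List.Pairwise.imp_of_mem ?_ (List.pairwise_lt_finRange P)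
    intro i j _ _ hij
    intro k
    by_cases hk : k < K j
    · obtain ⟨k', hk'⟩ := hnested i j hij ⟨k, hk⟩
      refine ⟨(k' : ℕ), fun ℓ hℓ => ?_⟩
      simp only [hlvl] at hℓ ⊢
      have hc : c j ℓ = ⟨k, hk⟩ := Fin.ext hℓ
      rw [hk' ℓ hc]
    · refine ⟨0, fun ℓ hℓ => ?_⟩
      simp only [hlvl] at hℓ
      have hlt := (c j ℓ).isLt
      exact absurd hℓ (by omega)
  -- identify cost with the IP objective up to a constant
  have hcost_sum : ∀ z : Fin L → ℝ,
      cost ls Finset.univ z = ∑ p : Fin P, lcost Finset.univ (lvl p) z := by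
    intro z
    rw [cost_eq_sum, hlsdef, List.map_map, Fin.sum_univ_def]
    rfl
  have hip : ∀ (p : Fin P) (z : Fin L → ℝ),
      (∑ k : Fin (K p), |(∑ ℓ ∈ Finset.univ.filter (fun ℓ => c p ℓ = k), z ℓ) - (N p k : ℝ)|)
      = lcost Finset.univ (lvl p) z
        + ∑ k ∈ (Finset.univ.image (c p))ᶜ, |(N p k : ℝ)| := by
    intro p z
    rw [← Finset.sum_add_sum_compl (Finset.univ.image (c p))]
    congr 1
    · -- image part equals lcost
      rw [lcost]
      have himg : Finset.univ.image (lvl p).1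
          = (Finset.univ.image (c p)).image (Fin.val) := by
        rw [hlvl, Finset.image_image]
        rfl
      rw [himg, Finset.sum_image (fun a _ b _ h => Fin.val_injective h)]
      refine Finset.sum_congr rfl fun k _ => ?_
      have hfil : Finset.univ.filter (fun ℓ => (lvl p).1 ℓ = (k : ℕ))
          = Finset.univ.filter (fun ℓ => c p ℓ = k) := by
        refine Finset.filter_congr fun ℓ _ => ?_
        rw [hlvl]
        constructor
        · intro h; exact Fin.ext h
        · intro h; exact congrArg Fin.val h
      rw [hfil]
      have hN2 : ((lvl p).2 (k : ℕ) : ℝ) = (N p k : ℝ) := by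
        rw [hlvl]
        simp only [Fin.is_lt, dif_pos, Fin.eta]
        push_cast
        rfl
      rw [hN2]
    · -- complement part: empty classes
      refine Finset.sum_congr rfl fun k hk => ?_
      have hempty : Finset.univ.filter (fun ℓ => c p ℓ = k) = ∅ := by
        rw [Finset.filter_eq_empty_iff]
        intro ℓ _
        intro hkk
        exact (Finset.mem_compl.mp hk) (Finset.mem_image.mpr ⟨ℓ, Finset.mem_univ ℓ, hkk⟩)
      rw [hempty, Finset.sum_empty, zero_sub, abs_neg]
  set Cc : ℝ := ∑ p : Fin P, ∑ k ∈ (Finset.univ.image (c p))ᶜ, |(N p k : ℝ)| with hCc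
  have hF : ∀ z : Fin L → ℝ,
      (∑ p : Fin P, ∑ k : Fin (K p),
        |(∑ ℓ ∈ Finset.univ.filter (fun ℓ => c p ℓ = k), z ℓ) - (N p k : ℝ)|)
      = cost ls Finset.univ z + Cc := by
    intro z
    rw [hcost_sum z, hCc, ← Finset.sum_add_distrib]
    exact Finset.sum_congr rfl fun p _ => hip p z
  -- an integer feasible point
  obtain ⟨t, htu, htc⟩ := Finset.exists_subset_card_eq (show T ≤ Finset.univ.card (α := Fin L) by
    simpa using hTL)
  set zstar : Fin L → ℕ := fun ℓ => if ℓ ∈ t then 1 else 0 with hzstar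
  have hzstar01 : ∀ ℓ, zstar ℓ = 0 ∨ zstar ℓ = 1 := by
    intro ℓ; rw [hzstar]; by_cases h : ℓ ∈ t <;> simp [h]
  have hzstarsum : (∑ ℓ, zstar ℓ) = T := by
    rw [hzstar, sum_indicator htu, htc]
  set S1 : Set ℝ := {val : ℝ | ∃ zv ∈ Q, val = ∑ p, ∑ k, zv.2 p k} with hS1
  set S2 : Set ℝ := {val : ℝ | ∃ z : Fin L → ℕ,
        (∀ ℓ, z ℓ = 0 ∨ z ℓ = 1) ∧
        (∑ ℓ, z ℓ) = T ∧
        val = ∑ p, ∑ k,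
          |(∑ ℓ ∈ Finset.univ.filter (fun ℓ => c p ℓ = k), (z ℓ : ℝ)) - (N p k : ℝ)|} with hS2
  -- membership helper : any binary z with sum T gives S2 value and Q point
  have hmkQ : ∀ z : Fin L → ℕ, (∀ ℓ, z ℓ = 0 ∨ z ℓ = 1) → (∑ ℓ, z ℓ) = T →
      (((fun ℓ => (z ℓ : ℝ)), fun p k =>
        |(∑ ℓ ∈ Finset.univ.filter (fun ℓ => c p ℓ = k), ((z ℓ : ℕ) : ℝ)) - (N p k : ℝ)|) ∈ Q) := by
    intro z h01 hsum
    rw [hQ]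
    refine ⟨?_, ?_, ?_⟩
    · intro ℓ
      rcases h01 ℓ with h | h <;> simp [h]
    · rw [← hsum]
      push_cast
      rfl
    · intro p k
      exact le_refl _
  have hS2sub : S2 ⊆ S1 := by
    rintro val ⟨z, h01, hsum, rfl⟩
    exact ⟨_, hmkQ z h01 hsum, rfl⟩
  have hS2ne : S2.Nonempty := ⟨_, ⟨zstar, hzstar01, hzstarsum, rfl⟩⟩
  have hS1ne : S1.Nonempty := by
    obtain ⟨v, hv⟩ := hS2ne
    exact ⟨v, hS2sub hv⟩
  have hbdd1 : BddBelow S1 := by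
    refine ⟨0, fun val hval => ?_⟩
    obtain ⟨zv, hzv, rfl⟩ := hval
    rw [hQ] at hzv
    refine Finset.sum_nonneg fun p _ => Finset.sum_nonneg fun k _ =>
      le_trans (abs_nonneg _) (hzv.2.2 p k)
  have hbdd2 : BddBelow S2 := by
    refine ⟨0, fun val hval => ?_⟩
    obtain ⟨z, _, _, rfl⟩ := hval
    exact Finset.sum_nonneg fun p _ => Finset.sum_nonneg fun k _ => abs_nonneg _
  refine le_antisymm (csInf_le_csInf hbdd1 hS2ne hS2sub) ?_
  refine le_csInf hS1ne ?_
  rintro b ⟨zv, hzv, rfl⟩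
  rw [hQ] at hzv
  obtain ⟨hb01, hbsum, hbv⟩ := hzv
  -- round
  obtain ⟨z0, z1, hz0le, hz1le, hz0sum, hz1sum, hz01ineq⟩ :=
    roundD ls hpw Finset.univ zv.1 (fun ℓ _ => hb01 ℓ)
  have hmT : (∑ ℓ ∈ Finset.univ, zv.1 ℓ) = (T : ℝ) := hbsum
  have hfloorT : ⌊∑ ℓ ∈ Finset.univ, zv.1 ℓ⌋₊ = T := by
    rw [hmT, Nat.floor_natCast]
  have hfrac0 : (∑ ℓ ∈ Finset.univ, zv.1 ℓ) - ((⌊∑ ℓ ∈ Finset.univ, zv.1 ℓ⌋₊ : ℕ) : ℝ) = 0 := by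
    rw [hfloorT, hmT]; ring
  rw [hfrac0] at hz01ineq
  have hcost0 : cost ls Finset.univ (fun ℓ => (z0 ℓ : ℝ)) ≤ cost ls Finset.univ zv.1 := by
    linarith [hz01ineq]
  have hz0mem : (∑ p : Fin P, ∑ k : Fin (K p),
      |(∑ ℓ ∈ Finset.univ.filter (fun ℓ => c p ℓ = k), ((z0 ℓ : ℕ) : ℝ)) - (N p k : ℝ)|) ∈ S2 := by
    refine ⟨z0, fun ℓ => ?_, ?_, rfl⟩
    · have := hz0le ℓ (Finset.mem_univ ℓ); omega
    · rw [hz0sum, hfloorT]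
  calc sInf S2 ≤ _ := csInf_le hbdd2 hz0mem
    _ = cost ls Finset.univ (fun ℓ => (z0 ℓ : ℝ)) + Cc := hF _
    _ ≤ cost ls Finset.univ zv.1 + Cc := by linarith
    _ = ∑ p : Fin P, ∑ k : Fin (K p),
        |(∑ ℓ ∈ Finset.univ.filter (fun ℓ => c p ℓ = k), zv.1 ℓ) - (N p k : ℝ)| := (hF _).symm
    _ ≤ ∑ p, ∑ k, zv.2 p k :=
        Finset.sum_le_sum fun p _ => Finset.sum_le_sum fun k _ => hbv p k
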